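/- Let G be a finite group, N a normal subgroup of G, F a field of characteristic p > 0, and I the right annihilator of J(F[N]) in F[G]. Let E be a simple F[G]-module and P a projective cover of E, i.e., a projective indecomposable F[G]-module with P/(J(F[G])·P) ≅ E. Then I·E = 0 (so that E is a module over F[G]/I, necessarily simple) if and only if I·P ≠ P; in that case P/(I·P) is a projective cover of E over F[G]/I. -/

import Mathlib

open MonoidAlgebra


section Aux

variable {R : Type} [Ring R] {M : Type} [AddCommGroup M] [Module R M]

/-- span of products of an ideal with a submodule -/
def idSmul (K : Ideal R) (X : Submodule R M) : Submodule R M :=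
  Submodule.span R {y : M | ∃ j ∈ K, ∃ x ∈ X, y = j • x}

lemma idSmul_le {K : Ideal R} {X Y : Submodule R M} (h : ∀ j ∈ K, ∀ x ∈ X, j • x ∈ Y) :
    idSmul K X ≤ Y := by
  refine Submodule.span_le.2 ?_
  rintro y ⟨j, hj, x, hx, rfl⟩
  exact h j hj x hx

lemma mem_idSmul {K : Ideal R} {X : Submodule R M} {j : R} {x : M} (hj : j ∈ K) (hx : x ∈ X) :
    j • x ∈ idSmul K X :=
  Submodule.subset_span ⟨j, hj, x, hx, rfl⟩

lemma idSmul_mono {K K' : Ideal R} {X X' : Submodule R M} (hK : K ≤ K') (hX : X ≤ X') :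
    idSmul K X ≤ idSmul K' X' :=
  idSmul_le fun j hj x hx => mem_idSmul (hK hj) (hX hx)

lemma idSmul_le_self {K : Ideal R} {X : Submodule R M} : idSmul K X ≤ X :=
  idSmul_le fun _ _ x hx => Submodule.smul_mem _ _ hx

lemma idSmul_bot_left {X : Submodule R M} : idSmul (⊥ : Ideal R) X = ⊥ := by
  refine le_bot_iff.1 (idSmul_le ?_)
  rintro j hj x -
  rcases (Ideal.mem_bot).1 hj with rfl
  simp

end Aux
section Aux2
variable {R : Type} [Ring R] {M : Type} [AddCommGroup M] [Module R M]

lemma idSmul_rep {K : Ideal R} (hK : ∀ x ∈ K, ∀ r : R, x * r ∈ K) (s : Finset M) {y : M}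
    (hy : y ∈ idSmul K (Submodule.span R (s : Set M))) :
    ∃ c : M → R, (∀ b ∈ s, c b ∈ K) ∧ y = ∑ b ∈ s, c b • b := by
  induction hy using Submodule.span_induction with
  | mem y hy =>
    rcases hy with ⟨j, hj, x, hx, rfl⟩
    obtain ⟨f, -, hf⟩ := Submodule.mem_span_finset.1 hx
    refine ⟨fun b => j * f b, fun b _ => hK j hj (f b), ?_⟩
    rw [← hf, Finset.smul_sum]
    exact Finset.sum_congr rfl fun b _ => by rw [smul_smul]
  | zero => exact ⟨0, by simp, by simp⟩
  | add a b _ _ ha hb =>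
    obtain ⟨c, hc, rfl⟩ := ha
    obtain ⟨d, hd, rfl⟩ := hb
    exact ⟨c + d, fun b hb => K.add_mem (hc b hb) (hd b hb),
      by simp [add_smul, Finset.sum_add_distrib]⟩
  | smul r a _ ha =>
    obtain ⟨c, hc, rfl⟩ := ha
    refine ⟨fun b => r * c b, fun b hb => K.mul_mem_left r (hc b hb), ?_⟩
    rw [Finset.smul_sum]
    exact Finset.sum_congr rfl fun b _ => by rw [smul_smul]

/-- Nakayama: a finitely generated submodule contained in `J·itself` is trivial,
where `J` is the Jacobson radical. -/
lemma nakayama_span (hJ2 : ∀ x ∈ Ideal.jacobson (⊥ : Ideal R), ∀ r : R,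
      x * r ∈ Ideal.jacobson (⊥ : Ideal R))
    (s : Finset M)
    (h : Submodule.span R (s : Set M) ≤
      idSmul (Ideal.jacobson (⊥ : Ideal R)) (Submodule.span R (s : Set M))) :
    Submodule.span R (s : Set M) = ⊥ := by
  classical
  induction s using Finset.strongInduction with
  | _ s ih =>
    rcases s.eq_empty_or_nonempty with rfl | ⟨a, ha⟩
    · simp
    · have hmem : a ∈ idSmul (Ideal.jacobson (⊥ : Ideal R)) (Submodule.span R (s : Set M)) :=
        h (Submodule.subset_span ha)
      obtain ⟨c, hc, hrep⟩ := idSmul_rep hJ2 s hmem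
      set t := s.erase a with ht
      -- split off the `a` term
      have hsum : a = c a • a + ∑ b ∈ t, c b • b :=
        hrep.trans (Finset.add_sum_erase s (fun b => c b • b) ha).symm
      have hsub : (1 - c a) • a = ∑ b ∈ t, c b • b := by
        rw [sub_smul, one_smul]
        exact sub_eq_iff_eq_add'.mpr hsum
      -- left inverse of 1 - c a
      obtain ⟨z, hz⟩ := Ideal.mem_jacobson_iff.1 (hc a ha) (-1)
      rw [Ideal.mem_bot, sub_eq_zero] at hz
      have hz' : z * (1 - c a) = 1 := by
        calc z * (1 - c a) = z * -1 * c a + z := by noncomm_ring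
        _ = 1 := hz
      have haspan : a ∈ Submodule.span R ((t : Finset M) : Set M) := by
        have h2 : a = z • ((1 - c a) • a) := by rw [smul_smul, hz', one_smul]
        rw [h2, hsub]
        exact Submodule.smul_mem _ _ (Submodule.sum_mem _ fun b hb =>
          Submodule.smul_mem _ _ (Submodule.subset_span hb))
      have hspan : Submodule.span R (s : Set M) =
          Submodule.span R ((t : Finset M) : Set M) := by
        conv_lhs => rw [← Finset.insert_erase ha, ← ht]
        rw [Finset.coe_insert, Submodule.span_insert_eq_span haspan]
      rw [hspan] at h ⊢
      exact ih t (ht ▸ Finset.erase_ssubset ha) h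

end Aux2
section Aux3
variable {R : Type} [Ring R] {M : Type} [AddCommGroup M] [Module R M]

lemma idSmul_idSmul (hJ2 : ∀ x ∈ Ideal.jacobson (⊥ : Ideal R), ∀ r : R,
      x * r ∈ Ideal.jacobson (⊥ : Ideal R)) (K : Ideal R) (X : Submodule R M) :
    idSmul (Ideal.jacobson (⊥ : Ideal R)) (idSmul K X)
      ≤ idSmul (idSmul (Ideal.jacobson (⊥ : Ideal R)) K) X := by
  have H : ∀ c ∈ idSmul K X, ∀ j ∈ Ideal.jacobson (⊥ : Ideal R),
      j • c ∈ idSmul (idSmul (Ideal.jacobson (⊥ : Ideal R)) K) X := by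
    intro c hc
    induction hc using Submodule.span_induction with
    | mem y hy =>
      intro j hj
      rcases hy with ⟨a, haK, x, hx, rfl⟩
      rw [smul_smul]
      have hja : j * a ∈ idSmul (Ideal.jacobson (⊥ : Ideal R)) K := by
        have := mem_idSmul (M := R) hj haK
        rwa [smul_eq_mul] at this
      exact mem_idSmul hja hx
    | zero => intro j hj; simp
    | add a b _ _ ha hb =>
      intro j hj
      rw [smul_add]
      exact Submodule.add_mem _ (ha j hj) (hb j hj)
    | smul r x _ hx =>
      intro j hj
      rw [smul_smul]
      exact hx (j * r) (hJ2 j hj r)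
  exact idSmul_le fun j hj c hc => H c hc j hj

lemma exists_iterate_idSmul_bot [IsArtinianRing R] [IsNoetherianRing R]
    (hJ2 : ∀ x ∈ Ideal.jacobson (⊥ : Ideal R), ∀ r : R,
      x * r ∈ Ideal.jacobson (⊥ : Ideal R)) :
    ∃ n, (fun X : Ideal R => idSmul (Ideal.jacobson (⊥ : Ideal R)) X)^[n] ⊤ = ⊥ := by
  set T := fun X : Ideal R => idSmul (Ideal.jacobson (⊥ : Ideal R)) X with hT
  have hanti : ∀ k, T^[k + 1] ⊤ ≤ T^[k] ⊤ := by
    intro k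
    induction k with
    | zero => exact le_top
    | succ k ih =>
      calc T^[k + 1 + 1] ⊤ = T (T^[k + 1] ⊤) := Function.iterate_succ_apply' T (k + 1) ⊤
        _ ≤ T (T^[k] ⊤) := idSmul_mono le_rfl ih
        _ = T^[k + 1] ⊤ := (Function.iterate_succ_apply' T k ⊤).symm
  have hmono : Antitone fun k => T^[k] ⊤ := antitone_nat_of_succ_le hanti
  obtain ⟨n, hn⟩ := IsArtinian.monotone_stabilizes
    (⟨fun k => OrderDual.toDual (T^[k] ⊤), fun _ _ h => hmono h⟩ : ℕ →o (Ideal R)ᵒᵈ)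
  have hstab : T^[n] ⊤ = T (T^[n] ⊤) := by
    have := hn (n + 1) (Nat.le_succ n)
    exact this.trans (Function.iterate_succ_apply' T n ⊤)
  obtain ⟨s, hs⟩ := IsNoetherian.noetherian (T^[n] ⊤)
  refine ⟨n, ?_⟩
  rw [← hs]
  refine nakayama_span hJ2 s ?_
  rw [hs]
  exact hstab.le

lemma superfluous_radical [IsArtinianRing R] [IsNoetherianRing R]
    (hJ2 : ∀ x ∈ Ideal.jacobson (⊥ : Ideal R), ∀ r : R,
      x * r ∈ Ideal.jacobson (⊥ : Ideal R))
    (X : Submodule R M)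
    (h : X ⊔ idSmul (Ideal.jacobson (⊥ : Ideal R)) (⊤ : Submodule R M) = ⊤) : X = ⊤ := by
  set J := Ideal.jacobson (⊥ : Ideal R) with hJ
  set T := fun Y : Ideal R => idSmul J Y with hT
  set S := fun Y : Submodule R M => idSmul J Y with hS
  obtain ⟨n, hn⟩ := exists_iterate_idSmul_bot hJ2
  -- claim 2 : S^[k] ⊤ ≤ idSmul (T^[k] ⊤) ⊤
  have claim2 : ∀ k, S^[k] ⊤ ≤ idSmul (T^[k] ⊤) (⊤ : Submodule R M) := by
    intro k
    induction k with
    | zero =>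
      simp only [Function.iterate_zero_apply]
      intro m hm
      simpa using mem_idSmul (Submodule.mem_top (x := (1 : R))) hm
    | succ k ih =>
      rw [Function.iterate_succ_apply' S, Function.iterate_succ_apply' T]
      calc S (S^[k] ⊤) ≤ idSmul J (idSmul (T^[k] ⊤) ⊤) := idSmul_mono le_rfl ih
        _ ≤ idSmul (idSmul J (T^[k] ⊤)) ⊤ := idSmul_idSmul hJ2 _ _
  -- claim 1 : X ⊔ S^[k+1] ⊤ = ⊤ for all k
  have claim1 : ∀ k, X ⊔ S^[k + 1] ⊤ = ⊤ := by
    intro k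
    induction k with
    | zero => simpa using h
    | succ k ih =>
      have key : S ⊤ ≤ X ⊔ S^[k + 2] ⊤ := by
        refine idSmul_le ?_
        intro j hj m _
        obtain ⟨x, hx, c, hc, rfl⟩ := Submodule.mem_sup.1 (ih ▸ Submodule.mem_top (x := m))
        rw [smul_add]
        refine Submodule.add_mem _ (Submodule.mem_sup_left (X.smul_mem j hx)) ?_
        refine Submodule.mem_sup_right ?_
        rw [show (k + 2) = (k + 1) + 1 by ring, Function.iterate_succ_apply']
        exact mem_idSmul hj hc
      refine top_le_iff.1 ?_
      calc (⊤ : Submodule R M) = X ⊔ S ⊤ := by simpa using h.symm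
        _ ≤ X ⊔ (X ⊔ S^[k + 2] ⊤) := sup_le_sup_left key X
        _ = X ⊔ S^[k + 2] ⊤ := by rw [← sup_assoc, sup_idem]
  -- conclude
  have hzero : S^[n + 1] ⊤ = ⊥ := by
    refine le_bot_iff.1 ?_
    calc S^[n + 1] ⊤ ≤ idSmul (T^[n + 1] ⊤) ⊤ := claim2 (n + 1)
      _ ≤ idSmul (⊥ : Ideal R) ⊤ := by
          refine idSmul_mono ?_ le_rfl
          rw [Function.iterate_succ_apply', hn]
          exact idSmul_le_self
      _ = ⊥ := idSmul_bot_left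
  have := claim1 n
  rwa [hzero, sup_bot_eq] at this

end Aux3

/-- Let `I` be the right annihilator of `J(F[N])` in `F[G]`, `E` a simple
`F[G]`-module and `P` a projective cover of `E` (a projective indecomposable module with
`P/(J(F[G])·P) ≅ E`).  Then `I·E = 0` if and only if `I·P ≠ P`; in that case `P/(I·P)` is a
projective cover of `E` over `F[G]/I`:  it is killed by `I`, it has the lifting property with
respect to surjections of modules killed by `I`, and it admits an essential epimorphism
onto `E`. -/
theorem projective_cover_mod_annihilator
    (F : Type) [Field F] (p : ℕ) (hp : 0 < p) (hchar : CharP F p)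
    (G : Type) [Group G] [Fintype G] (N : Subgroup G) (hN : N.Normal)
    (E : Type) [AddCommGroup E] [Module (MonoidAlgebra F G) E]
    (P : Type) [AddCommGroup P] [Module (MonoidAlgebra F G) P] :
    let ι : MonoidAlgebra F N →ₐ[F] MonoidAlgebra F G :=
      MonoidAlgebra.mapDomainAlgHom F F N.subtype
    let Jset : Set (MonoidAlgebra F G) :=
      ι '' ((⊥ : Ideal (MonoidAlgebra F N)).jacobson : Set (MonoidAlgebra F N))
    let Iset : Set (MonoidAlgebra F G) := {α : MonoidAlgebra F G | ∀ x ∈ Jset, x * α = 0}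
    -- J(F[G])·P and I·P
    let JP : Submodule (MonoidAlgebra F G) P :=
      Submodule.span (MonoidAlgebra F G)
        {x : P | ∃ j ∈ ((⊥ : Ideal (MonoidAlgebra F G)).jacobson :
          Set (MonoidAlgebra F G)), ∃ m : P, x = j • m}
    let IP : Submodule (MonoidAlgebra F G) P :=
      Submodule.span (MonoidAlgebra F G) {x : P | ∃ i ∈ Iset, ∃ m : P, x = i • m}
    -- E is simple
    IsSimpleModule (MonoidAlgebra F G) E →
    -- P is projective
    Module.Projective (MonoidAlgebra F G) P →
    -- P is indecomposable
    (∀ X Y : Submodule (MonoidAlgebra F G) P, IsCompl X Y → X = ⊥ ∨ Y = ⊥) →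
    -- P/(J(F[G])·P) ≅ E
    Nonempty ((P ⧸ JP) ≃ₗ[MonoidAlgebra F G] E) →
    -- I·E = 0 iff I·P ≠ P
    (((∀ i ∈ Iset, ∀ v : E, i • v = 0) ↔ IP ≠ ⊤) ∧
    -- in that case, P/(I·P) is a projective cover of E over F[G]/I
     ((∀ i ∈ Iset, ∀ v : E, i • v = 0) →
        -- P/(I·P) is a module over F[G]/I (it is killed by I)
        (∀ i ∈ Iset, ∀ q : P ⧸ IP, i • q = 0) ∧
        -- P/(I·P) is projective over F[G]/I : lifting property for F[G]/I-modules
        (∀ (M₁ M₂ : Type) [AddCommGroup M₁] [AddCommGroup M₂]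
            [Module (MonoidAlgebra F G) M₁] [Module (MonoidAlgebra F G) M₂],
          (∀ i ∈ Iset, ∀ m : M₁, i • m = 0) → (∀ i ∈ Iset, ∀ m : M₂, i • m = 0) →
          ∀ f : M₁ →ₗ[MonoidAlgebra F G] M₂, Function.Surjective f →
          ∀ g : (P ⧸ IP) →ₗ[MonoidAlgebra F G] M₂,
            ∃ h : (P ⧸ IP) →ₗ[MonoidAlgebra F G] M₁, f ∘ₗ h = g) ∧
        -- P/(I·P) covers E : an epimorphism onto E with superfluous kernel
        (∃ π : (P ⧸ IP) →ₗ[MonoidAlgebra F G] E, Function.Surjective π ∧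
          ∀ X : Submodule (MonoidAlgebra F G) (P ⧸ IP),
            X ⊔ LinearMap.ker π = ⊤ → X = ⊤))) := by
  intro ι Jset Iset JP IP hE hProj hInd hiso
  obtain ⟨φ⟩ := hiso
  -- finiteness instances
  haveI : Module.Finite F (MonoidAlgebra F G) := Module.Finite.of_basis
    (MonoidAlgebra.basis G F)
  haveI : IsNoetherianRing (MonoidAlgebra F G) := isNoetherian_of_tower F inferInstance
  haveI : IsArtinianRing (MonoidAlgebra F G) := isArtinian_of_tower F inferInstance
  -- the Jacobson radical is two-sided
  have hJ2 : ∀ x ∈ Ideal.jacobson (⊥ : Ideal (MonoidAlgebra F G)), ∀ r : (MonoidAlgebra F G),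
      x * r ∈ Ideal.jacobson (⊥ : Ideal (MonoidAlgebra F G)) := by
    intro x hx r
    exact Ideal.mul_mem_right r _ hx
  have hJP : JP = idSmul (Ideal.jacobson (⊥ : Ideal (MonoidAlgebra F G))) (⊤ : Submodule (MonoidAlgebra F G) P) := by
    show Submodule.span (MonoidAlgebra F G) _ = Submodule.span (MonoidAlgebra F G) _
    congr 1
    ext x
    constructor
    · rintro ⟨j, hj, m, rfl⟩; exact ⟨j, hj, m, Submodule.mem_top, rfl⟩
    · rintro ⟨j, hj, m, -, rfl⟩; exact ⟨j, hj, m, rfl⟩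
  have hsup : ∀ X : Submodule (MonoidAlgebra F G) P, X ⊔ JP = ⊤ → X = ⊤ := by
    intro X hX
    exact superfluous_radical hJ2 X (by rwa [← hJP])
  -- the projection π₀ : P → E with kernel JP
  set π₀ : P →ₗ[MonoidAlgebra F G] E := (φ : (P ⧸ JP) →ₗ[MonoidAlgebra F G] E) ∘ₗ JP.mkQ with hπ₀
  have hker : LinearMap.ker π₀ = JP := by
    rw [hπ₀, LinearMap.ker_comp, LinearEquiv.ker, Submodule.comap_bot, Submodule.ker_mkQ]
  have hsurj₀ : Function.Surjective π₀ := by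
    rw [hπ₀, LinearMap.coe_comp]
    exact φ.surjective.comp (Submodule.mkQ_surjective JP)
  -- if I kills E then IP ≤ JP
  have hIPle : (∀ i ∈ Iset, ∀ v : E, i • v = 0) → IP ≤ JP := by
    intro hkill
    rw [← hker]
    refine Submodule.span_le.2 ?_
    rintro x ⟨i, hi, m, rfl⟩
    rw [SetLike.mem_coe, LinearMap.mem_ker, map_smul]
    exact hkill i hi _
  haveI : IsSimpleModule (MonoidAlgebra F G) E := hE
  constructor
  · constructor
    · -- I kills E → IP ≠ ⊤
      intro hkill hIPtop
      have hJPtop : JP = ⊤ := top_le_iff.1 (hIPtop ▸ hIPle hkill)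
      haveI : Subsingleton (P ⧸ JP) :=
        Submodule.Quotient.subsingleton_iff.2 hJPtop
      haveI : Subsingleton E := φ.symm.toEquiv.subsingleton
      exact absurd (IsSimpleModule.nontrivial (MonoidAlgebra F G) E) (not_nontrivial E)
    · -- IP ≠ ⊤ → I kills E
      intro hne
      haveI : IsSimpleModule (MonoidAlgebra F G) (P ⧸ JP) := IsSimpleModule.congr φ
      have hIPJP : IP ≤ JP := by
        rcases eq_bot_or_eq_top (Submodule.map JP.mkQ IP) with hbot | htop
        · intro x hx
          have : JP.mkQ x ∈ Submodule.map JP.mkQ IP := Submodule.mem_map_of_mem hx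
          rw [hbot, Submodule.mem_bot] at this
          rwa [← Submodule.ker_mkQ JP, LinearMap.mem_ker]
        · exfalso
          apply hne
          apply hsup IP
          have := congrArg (Submodule.comap JP.mkQ) htop
          rwa [Submodule.comap_map_eq, Submodule.ker_mkQ, Submodule.comap_top] at this
      intro i hi v
      obtain ⟨m, rfl⟩ := hsurj₀ v
      rw [← map_smul]
      have : i • m ∈ LinearMap.ker π₀ := by
        rw [hker]
        exact hIPJP (Submodule.subset_span ⟨i, hi, m, rfl⟩)
      exact LinearMap.mem_ker.1 this
  · intro hkill
    have hIPJP : IP ≤ JP := hIPle hkill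
    refine ⟨?_, ?_, ?_⟩
    · -- P/IP killed by I
      intro i hi q
      obtain ⟨m, rfl⟩ := Submodule.mkQ_surjective IP q
      have hmem : i • m ∈ IP := Submodule.subset_span ⟨i, hi, m, rfl⟩
      calc i • IP.mkQ m = IP.mkQ (i • m) := (IP.mkQ.map_smul i m).symm
        _ = 0 := by rwa [Submodule.mkQ_apply, Submodule.Quotient.mk_eq_zero]
    · -- lifting property
      intro M₁ M₂ _ _ _ _ h₁ _ f hf g
      obtain ⟨h₀, hh₀⟩ := Module.projective_lifting_property f (g ∘ₗ IP.mkQ) hf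
      have hle : IP ≤ LinearMap.ker h₀ := by
        refine Submodule.span_le.2 ?_
        rintro x ⟨i, hi, m, rfl⟩
        rw [SetLike.mem_coe, LinearMap.mem_ker, map_smul]
        exact h₁ i hi _
      refine ⟨IP.liftQ h₀ hle, ?_⟩
      refine Submodule.linearMap_qext _ ?_
      rw [LinearMap.comp_assoc, Submodule.liftQ_mkQ, hh₀]
    · -- the essential epimorphism
      have hle : IP ≤ LinearMap.ker π₀ := by rw [hker]; exact hIPJP
      refine ⟨IP.liftQ π₀ hle, ?_, ?_⟩
      · intro v
        obtain ⟨m, rfl⟩ := hsurj₀ v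
        exact ⟨IP.mkQ m, by rw [Submodule.mkQ_apply, Submodule.liftQ_apply]⟩
      · intro X hX
        set X' := Submodule.comap IP.mkQ X with hX'
        have hX'JP : X' ⊔ JP = ⊤ := by
          refine top_le_iff.1 ?_
          intro m _
          have hm : IP.mkQ m ∈ X ⊔ LinearMap.ker (IP.liftQ π₀ hle) := hX ▸ Submodule.mem_top
          obtain ⟨x, hx, k, hk, hxk⟩ := Submodule.mem_sup.1 hm
          obtain ⟨a, rfl⟩ := Submodule.mkQ_surjective IP x
          obtain ⟨b, rfl⟩ := Submodule.mkQ_surjective IP k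
          have ha : a ∈ X' := hx
          have hb : b ∈ JP := by
            rw [LinearMap.mem_ker, Submodule.mkQ_apply, Submodule.liftQ_apply] at hk
            rw [← hker, LinearMap.mem_ker]
            exact hk
          have hrest : m - a - b ∈ JP := by
            apply hIPJP
            rw [← Submodule.Quotient.mk_eq_zero IP]
            have : IP.mkQ (m - a - b) = 0 := by
              rw [map_sub, map_sub, ← hxk]
              abel
            rwa [Submodule.mkQ_apply] at this
          have : m = a + (b + (m - a - b)) := by abel
          rw [this]
          exact Submodule.add_mem _ (Submodule.mem_sup_left ha)
            (Submodule.mem_sup_right (JP.add_mem hb hrest))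
        have hX'top : X' = ⊤ := hsup X' hX'JP
        refine top_le_iff.1 ?_
        intro q _
        obtain ⟨m, rfl⟩ := Submodule.mkQ_surjective IP q
        have : m ∈ X' := hX'top ▸ Submodule.mem_top
        exact this
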